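/- For m ∈ ℕ, m ≥ 1, define on smooth functions of x > 0 the operators R_l := ∂_x − l/x for l = 1, …, m, and let P_{2m−1}(t,x) = Σ_{j=0}^{m−1} (t^j/j!)·x^{2m−1−2j}/(2m−1−2j)! be the heat polynomial of degree 2m−1. Then R_m ∘ R_{m−1} ∘ ⋯ ∘ R_1 applied to P_{2m−1} (as a function of x, for each fixed t) is identically zero on x > 0. -/

import Mathlib

/-- The operator `R_l = ∂_x - l/x` on functions of one real variable. -/
noncomputable def opR (l : ℕ) (f : ℝ → ℝ) : ℝ → ℝ :=
  fun x => deriv f x - (l : ℝ) / x * f x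

/-- The composition `R_m ∘ R_{m-1} ∘ ⋯ ∘ R_1` (with `R_1` applied first). -/
noncomputable def opRcomp : ℕ → (ℝ → ℝ) → (ℝ → ℝ)
  | 0, f => f
  | l + 1, f => opR (l + 1) (opRcomp l f)

open Finset

/-- coefficient after k applications -/
noncomputable def cc (t : ℝ) (m k j : ℕ) : ℝ :=
  t ^ j / (Nat.factorial j : ℝ) * 2 ^ k * (Nat.factorial (m - 1 - j) : ℝ) /
    ((Nat.factorial (m - 1 - j - k) : ℝ) * (Nat.factorial (2 * (m - j) - 1) : ℝ))

noncomputable def gg (t : ℝ) (m k : ℕ) : ℝ → ℝ :=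
  fun x => ∑ j ∈ range (m - k), cc t m k j * x ^ (2 * (m - j) - 1 - k)

lemma gg_hasDeriv (t : ℝ) (m k : ℕ) (x : ℝ) :
    HasDerivAt (gg t m k)
      (∑ j ∈ range (m - k),
        cc t m k j * ((2 * (m - j) - 1 - k : ℕ) * x ^ (2 * (m - j) - 1 - k - 1))) x := by
  apply HasDerivAt.fun_sum
  intro j _
  exact (hasDerivAt_pow _ x).const_mul (cc t m k j)

lemma cc_rec (t : ℝ) (m k j : ℕ) (hj : j + 1 < m - k) :
    cc t m (k + 1) j = cc t m k j * (2 * (m - 1 - j - k) : ℕ) := by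
  obtain ⟨b, hb⟩ : ∃ b, m - 1 - j - k = b + 1 := ⟨m - 1 - j - k - 1, by omega⟩
  have hb' : m - 1 - j - (k + 1) = b := by omega
  rw [cc, cc, hb, hb', Nat.factorial_succ]
  have h1 : (Nat.factorial b : ℝ) ≠ 0 := Nat.cast_ne_zero.mpr (Nat.factorial_ne_zero b)
  have h2 : (Nat.factorial (2 * (m - j) - 1) : ℝ) ≠ 0 :=
    Nat.cast_ne_zero.mpr (Nat.factorial_ne_zero _)
  have h3 : (Nat.factorial j : ℝ) ≠ 0 := Nat.cast_ne_zero.mpr (Nat.factorial_ne_zero j)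
  have h4 : ((b : ℝ) + 1) ≠ 0 := by positivity
  push_cast
  field_simp
  ring

lemma key (m : ℕ) (hm : 1 ≤ m) (t : ℝ) :
    ∀ k ≤ m, ∀ x : ℝ, 0 < x →
      opRcomp k (fun x => ∑ j ∈ Finset.range m,
        t ^ j / (Nat.factorial j : ℝ) *
          x ^ (2 * (m - j) - 1) / (Nat.factorial (2 * (m - j) - 1) : ℝ)) x = gg t m k x := by
  intro k
  induction k with
  | zero =>
    intro _ x hx
    show _ = _
    rw [opRcomp, gg]
    simp only [Nat.sub_zero]
    refine Finset.sum_congr rfl fun j hj => ?_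
    rw [cc]
    have h1 : (Nat.factorial (m - 1 - j) : ℝ) ≠ 0 :=
      Nat.cast_ne_zero.mpr (Nat.factorial_ne_zero _)
    have h2 : (Nat.factorial (2 * (m - j) - 1) : ℝ) ≠ 0 :=
      Nat.cast_ne_zero.mpr (Nat.factorial_ne_zero _)
    rw [Nat.sub_zero]
    field_simp
  | succ k ih =>
    intro hk x hx
    have hkm : k ≤ m := le_of_lt (Nat.lt_of_succ_le hk)
    have heq : opRcomp (k + 1) (fun x => ∑ j ∈ Finset.range m,
        t ^ j / (Nat.factorial j : ℝ) *
          x ^ (2 * (m - j) - 1) / (Nat.factorial (2 * (m - j) - 1) : ℝ)) x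
        = deriv (gg t m k) x - ((k : ℝ) + 1) / x * gg t m k x := by
      rw [opRcomp, opR]
      have hev : opRcomp k (fun x => ∑ j ∈ Finset.range m,
          t ^ j / (Nat.factorial j : ℝ) *
            x ^ (2 * (m - j) - 1) / (Nat.factorial (2 * (m - j) - 1) : ℝ))
          =ᶠ[nhds x] gg t m k :=
        Filter.eventuallyEq_of_mem (Ioi_mem_nhds hx) (fun y hy => ih hkm y hy)
      rw [hev.deriv_eq, ih hkm x hx]
      push_cast
      ring
    rw [heq, (gg_hasDeriv t m k x).deriv]
    -- now the algebraic identity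
    rw [gg, gg]
    have hxne : x ≠ 0 := ne_of_gt hx
    have hsplit : m - k = (m - (k + 1)) + 1 := by omega
    rw [Finset.mul_sum, ← Finset.sum_sub_distrib, hsplit, Finset.sum_range_succ]
    -- last term vanishes
    have hlast : cc t m k (m - (k+1)) *
          ((2 * (m - (m - (k+1))) - 1 - k : ℕ) *
            x ^ (2 * (m - (m - (k+1))) - 1 - k - 1)) -
        ((k : ℝ) + 1) / x * (cc t m k (m - (k+1)) * x ^ (2 * (m - (m - (k+1))) - 1 - k)) = 0 := by
      have h1 : 2 * (m - (m - (k+1))) - 1 - k = k + 1 := by omega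
      rw [h1]
      have h2 : x ^ (k + 1) = x * x ^ k := by ring
      rw [h2]
      field_simp
      rw [show k + 1 - 1 = k by omega]
      push_cast
      ring
    rw [hlast, add_zero]
    refine Finset.sum_congr rfl fun j hj => ?_
    rw [Finset.mem_range] at hj
    have hj' : j + 1 < m - k := by omega
    rw [cc_rec t m k j hj']
    have he1 : 2 * (m - j) - 1 - k - 1 = 2 * (m - j) - 1 - (k + 1) := by omega
    have he2 : 2 * (m - j) - 1 - k = (2 * (m - j) - 1 - (k + 1)) + 1 := by omega
    rw [he1, he2, pow_succ]
    have hcast : ((2 * (m - j) - 1 - (k + 1) + 1 : ℕ) : ℝ)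
        = ((2 * (m - 1 - j - k) : ℕ) : ℝ) + ((k : ℝ) + 1) := by
      have h : 2 * (m - j) - 1 - (k + 1) + 1 = 2 * (m - 1 - j - k) + (k + 1) := by omega
      rw [h]
      push_cast
      ring
    rw [hcast]
    field_simp
    ring

theorem stmt17 (m : ℕ) (hm : 1 ≤ m) (t : ℝ) :
    ∀ x : ℝ, 0 < x →
      opRcomp m (fun x => ∑ j ∈ Finset.range m,
        t ^ j / (Nat.factorial j : ℝ) *
          x ^ (2 * (m - j) - 1) / (Nat.factorial (2 * (m - j) - 1) : ℝ)) x = 0 := by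
  intro x hx
  rw [key m hm t m le_rfl x hx, gg]
  simp
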